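/- Let κ be an infinite cardinal, F a field with |F| ≤ κ, and X a vector space over F with dim X = κ⁺. Then X \ {0} can be partitioned into κ many linearly independent subsets. -/

import Mathlib

universe u

open Cardinal Set

section helpers

variable {F : Type u} {V : Type u} [Field F] [AddCommGroup V] [Module F V]
variable {ι : Type u} [LinearOrder ι] [Nonempty ι]

/-- The largest index in the support of the coordinates of `v`. -/
noncomputable def topIdx (b : Module.Basis ι F V) (v : V) : ι :=
  if h : (b.repr v).support.Nonempty then (b.repr v).support.max' h
  else Classical.arbitrary ι

lemma topIdx_mem (b : Module.Basis ι F V) {v : V} (hv : v ≠ 0) :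
    topIdx b v ∈ (b.repr v).support := by
  have h : (b.repr v).support.Nonempty := by
    rw [Finsupp.support_nonempty_iff]
    simpa using hv
  rw [topIdx, dif_pos h]
  exact Finset.max'_mem _ h

lemma le_topIdx (b : Module.Basis ι F V) {v : V} {y : ι} (hy : y ∈ (b.repr v).support) :
    y ≤ topIdx b v := by
  have h : (b.repr v).support.Nonempty := ⟨y, hy⟩
  rw [topIdx, dif_pos h]
  exact Finset.le_max' _ _ hy

lemma indep_of_topIdx_inj (b : Module.Basis ι F V) (S : Set V) (h0 : (0 : V) ∉ S)
    (hinj : ∀ v ∈ S, ∀ w ∈ S, topIdx b v = topIdx b w → v = w) :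
    LinearIndependent F (Subtype.val : S → V) := by
  have : LinearIndependent F (fun x => x : S → V) := by
    refine (linearIndepOn_iff (R := F) (v := (id : V → V)) (s := S)).mpr ?_
    intro l hl hl0
    rw [Finsupp.mem_supported] at hl
    by_contra hne
    have hsupp : l.support.Nonempty := Finsupp.support_nonempty_iff.mpr hne
    obtain ⟨v, hvmem, hvmax⟩ := l.support.exists_max_image (topIdx b) hsupp
    have hvS : v ∈ S := hl hvmem
    have hv0 : v ≠ 0 := fun h => h0 (h ▸ hvS)
    set x := topIdx b v with hx
    have hrepr : (b.repr (Finsupp.linearCombination F id l)) x = 0 := by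
      rw [hl0]; simp
    rw [Finsupp.linearCombination_apply, Finsupp.sum, map_sum] at hrepr
    have hsum : ∀ w ∈ l.support, w ≠ v → (b.repr (l w • (id w : V))) x = 0 := by
      intro w hw hwv
      have hwS : w ∈ S := hl hw
      simp only [id, map_smul, Finsupp.smul_apply, smul_eq_mul]
      have : (b.repr w) x = 0 := by
        by_contra hne'
        have hxs : x ∈ (b.repr w).support := Finsupp.mem_support_iff.mpr hne'
        have h1 : x ≤ topIdx b w := le_topIdx b hxs
        have h2 : topIdx b w ≤ x := hvmax w hw
        exact hwv (hinj w hwS v hvS (le_antisymm h2 h1))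
      rw [this, mul_zero]
    rw [Finset.sum_apply'] at hrepr
    rw [Finset.sum_eq_single v hsum (fun h => absurd hvmem h)] at hrepr
    simp only [id, map_smul, Finsupp.smul_apply, smul_eq_mul] at hrepr
    have hne0 : (b.repr v) x ≠ 0 := Finsupp.mem_support_iff.mp (topIdx_mem b hv0)
    have : l v = 0 := by
      rcases mul_eq_zero.mp hrepr with h | h
      · exact h
      · exact absurd h hne0
    exact Finsupp.mem_support_iff.mp hvmem this
  exact this

lemma mk_finsupp_le_of_le {σ : Type u} (κ : Cardinal.{u}) (hκ : ℵ₀ ≤ κ)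
    (hσ : #σ ≤ κ) (hF : #F ≤ κ) : #(σ →₀ F) ≤ κ := by
  cases fintypeOrInfinite σ
  · rw [Cardinal.mk_finsupp_of_fintype]
    calc #F ^ Fintype.card σ ≤ κ ^ Fintype.card σ := by
          exact pow_le_pow_left₀ (by simp) hF _
      _ ≤ κ := Cardinal.power_nat_le hκ
  · rw [Cardinal.mk_finsupp_of_infinite]
    exact max_le hσ hF

end helpers

open Cardinal in
theorem stmt4 {F : Type u} {V : Type u} [Field F] [AddCommGroup V] [Module F V]
    (κ : Cardinal.{u}) (hκ : ℵ₀ ≤ κ) (hF : #F ≤ κ)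
    (hdim : Module.rank F V = Order.succ κ) :
    ∃ c : κ.out → Set V, (∀ i, LinearIndependent F (Subtype.val : c i → V)) ∧
      Pairwise (Function.onFun Disjoint c) ∧
      (⋃ i, c i) = {v : V | v ≠ 0} := by
  classical
  set ι := (Order.succ κ).ord.ToType with hι
  have hmkι : #ι = Order.succ κ := Cardinal.mk_ord_toType _
  have hιne : Nonempty ι := by
    rw [← Cardinal.mk_ne_zero_iff, hmkι]
    exact (Cardinal.succ_ne_zero κ)
  have hout : Nonempty κ.out := by
    rw [← Cardinal.mk_ne_zero_iff, Cardinal.mk_out]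
    exact (Cardinal.aleph0_pos.trans_le hκ).ne'
  -- build a basis indexed by ι
  let b₀ := Module.Basis.ofVectorSpace F V
  have hmk : #(Module.Basis.ofVectorSpaceIndex F V) = #ι := by
    rw [b₀.mk_eq_rank'', hdim, hmkι]
  let e : (Module.Basis.ofVectorSpaceIndex F V) ≃ ι := (Cardinal.eq.mp hmk).some
  let b : Module.Basis ι F V := b₀.reindex e
  -- the sets of vectors with a given top index have size ≤ κ
  have hIic : ∀ x : ι, #(Set.Iic x) ≤ κ := by
    intro x
    have h1 : #(Set.Iio x) < Order.succ κ := Cardinal.mk_Iio_ord_toType x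
    have h2 : #(Set.Iio x) ≤ κ := Order.lt_succ_iff.mp h1
    have h3 : Set.Iic x = insert x (Set.Iio x) := by
      ext y; simp [le_iff_lt_or_eq, or_comm]
    rw [h3]
    calc #(insert x (Set.Iio x) : Set ι) ≤ #(Set.Iio x) + 1 := Cardinal.mk_insert_le
      _ ≤ κ + 1 := by exact add_le_add_left h2 1
      _ = κ := Cardinal.add_one_eq hκ
  have hT : ∀ x : ι, #{v : V // v ≠ 0 ∧ topIdx b v = x} ≤ κ := by
    intro x
    have hinj : Function.Injective
        (fun v : {v : V // v ≠ 0 ∧ topIdx b v = x} =>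
          (b.repr v.1).subtypeDomain (· ∈ Set.Iic x)) := by
      rintro ⟨v, hv, hvx⟩ ⟨w, hw, hwx⟩ hvw
      have hsub : ∀ (u : V), u ≠ 0 → topIdx b u = x → ∀ y : ι, y ∉ Set.Iic x →
          (b.repr u) y = 0 := by
        intro u hu hux y hy
        by_contra hne
        exact hy (hux ▸ le_topIdx b (Finsupp.mem_support_iff.mpr hne))
      have : b.repr v = b.repr w := by
        ext y
        by_cases hy : y ∈ Set.Iic x
        · have := congrFun (congrArg (⇑) hvw) ⟨y, hy⟩
          simpa using this
        · rw [hsub v hv hvx y hy, hsub w hw hwx y hy]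
      simpa using b.repr.injective this
    calc #{v : V // v ≠ 0 ∧ topIdx b v = x}
        ≤ #(Set.Iic x →₀ F) := Cardinal.mk_le_of_injective hinj
      _ ≤ κ := mk_finsupp_le_of_le κ hκ (hIic x) hF
  -- choose embeddings into κ.out
  have hTemb : ∀ x : ι, Nonempty ({v : V // v ≠ 0 ∧ topIdx b v = x} ↪ κ.out) := by
    intro x
    rw [← Cardinal.le_def]
    rw [Cardinal.mk_out]
    exact hT x
  let emb : (x : ι) → ({v : V // v ≠ 0 ∧ topIdx b v = x} ↪ κ.out) :=
    fun x => (hTemb x).some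
  -- the coloring
  let colorAux : ι → V → κ.out := fun x v =>
    if h : v ≠ 0 ∧ topIdx b v = x then emb x ⟨v, h⟩ else Classical.arbitrary _
  let color : V → κ.out := fun v => colorAux (topIdx b v) v
  refine ⟨fun i => {v : V | v ≠ 0 ∧ color v = i}, ?_, ?_, ?_⟩
  · intro i
    apply indep_of_topIdx_inj b
    · simp
    · rintro v ⟨hv, hcv⟩ w ⟨hw, hcw⟩ htop
      have h1 : colorAux (topIdx b v) v = colorAux (topIdx b v) w := by
        have : colorAux (topIdx b w) w = colorAux (topIdx b v) w := by rw [htop]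
        rw [show colorAux (topIdx b v) v = color v from rfl, hcv, ← hcw,
          show color w = colorAux (topIdx b w) w from rfl, this]
      set x := topIdx b v with hx
      have hvm : v ≠ 0 ∧ topIdx b v = x := ⟨hv, rfl⟩
      have hwm : w ≠ 0 ∧ topIdx b w = x := ⟨hw, htop.symm⟩
      rw [show colorAux x v = emb x ⟨v, hvm⟩ from dif_pos hvm,
        show colorAux x w = emb x ⟨w, hwm⟩ from dif_pos hwm] at h1
      have := (emb x).injective h1
      exact Subtype.mk_eq_mk.mp this
  · intro i j hij
    rw [Function.onFun, Set.disjoint_left]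
    rintro v ⟨hv, hcv⟩ ⟨hv', hcv'⟩
    exact hij (hcv ▸ hcv')
  · ext v
    simp only [Set.mem_iUnion, Set.mem_setOf_eq]
    exact ⟨fun ⟨i, h, _⟩ => h, fun h => ⟨color v, h, rfl⟩⟩
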